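/- Positivity and constancy of the Wronskian (Lemma 6.1): Let μ ≥ 1 and a, r : ℝ → ℝ continuous with 1/μ ≤ a(x) ≤ μ and |r(x)| ≤ μ for all x, let γ > γ̲, and let φ_γ and φ̃_γ be generalized principal eigenfunctions. Then the function W_γ(x) := a(x)(φ̃_γ'(x)φ_γ(x) − φ_γ'(x)φ̃_γ(x)) is constant on ℝ, and its constant value is strictly positive. -/

import Mathlib

open MeasureTheory Filter Metric Set

/-- The generalized principal eigenvalue `γ̲`: the supremum over nonzero compactly
supported `C¹` functions `φ` of the Rayleigh quotient
`(∫ (r φ² − a (φ')²))/(∫ φ²)`. -/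
noncomputable def gammaBar (a r : ℝ → ℝ) : ℝ :=
  sSup {c : ℝ | ∃ φ : ℝ → ℝ, ContDiff ℝ 1 φ ∧ HasCompactSupport φ ∧ φ ≠ 0 ∧
    c = (∫ x : ℝ, (r x * φ x ^ 2 - a x * deriv φ x ^ 2)) / ∫ x : ℝ, φ x ^ 2}

/-- A generalized principal eigenfunction `φ` (with explicit derivative `φ'`):
positive, `φ(0) = 1`, `(aφ')' + (r − γ)φ = 0` pointwise, and `φ → 0` along the
filter `l` (`atTop` for `φ_γ`, `atBot` for `φ̃_γ`). -/
def IsGenPrincEig (a r : ℝ → ℝ) (γ : ℝ) (l : Filter ℝ) (φ φ' : ℝ → ℝ) : Prop :=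
  (∀ x, 0 < φ x) ∧ φ 0 = 1 ∧
  (∀ x, HasDerivAt φ (φ' x) x) ∧
  (∀ x, HasDerivAt (fun y => a y * φ' y) ((γ - r x) * φ x) x) ∧
  Tendsto φ l (nhds 0)

lemma hcs_sq {ψ : ℝ → ℝ} (h : HasCompactSupport ψ) :
    HasCompactSupport (fun x => ψ x ^ 2) := by
  exact h.comp_left (g := fun t : ℝ => t ^ 2) (by simp)

lemma hcs_mul_left {g ψ : ℝ → ℝ} (h : HasCompactSupport ψ) :
    HasCompactSupport (fun x => g x * ψ x) :=
  HasCompactSupport.mul_left h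

lemma hcs_sub {f g : ℝ → ℝ} (hf : HasCompactSupport f) (hg : HasCompactSupport g) :
    HasCompactSupport (fun x => f x - g x) := by
  have hng : HasCompactSupport (fun x => -(g x)) := by
    exact hg.comp_left (g := fun t : ℝ => -t) (by simp)
  have := hf.add hng
  have h2 : (fun x => f x - g x) = f + fun x => -g x := by funext x; simp [sub_eq_add_neg]
  rw [h2]; exact this

lemma rayleigh_le (μ : ℝ) (hμ : 1 ≤ μ) (a r : ℝ → ℝ)
    (hac : Continuous a) (hrc : Continuous r)
    (ha : ∀ x, 1 / μ ≤ a x ∧ a x ≤ μ) (hr : ∀ x, |r x| ≤ μ)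
    (ψ : ℝ → ℝ) (h1 : ContDiff ℝ 1 ψ) (h2 : HasCompactSupport ψ) (h3 : ψ ≠ 0) :
    (∫ x : ℝ, (r x * ψ x ^ 2 - a x * deriv ψ x ^ 2)) / ∫ x : ℝ, ψ x ^ 2 ≤ μ := by
  have hμ0 : (0:ℝ) < μ := lt_of_lt_of_le one_pos hμ
  have hapos : ∀ x, 0 < a x := fun x => lt_of_lt_of_le (by positivity) (ha x).1
  have hψc : Continuous ψ := h1.continuous
  have hdc : Continuous (deriv ψ) := (contDiff_one_iff_deriv.mp h1).2
  have hsq : Integrable (fun x => ψ x ^ 2) := by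
    exact ((hψc.pow 2).integrable_of_hasCompactSupport (hcs_sq h2))
  have hnum : Integrable (fun x => r x * ψ x ^ 2 - a x * deriv ψ x ^ 2) := by
    apply Continuous.integrable_of_hasCompactSupport
    · exact (hrc.mul (hψc.pow 2)).sub (hac.mul (hdc.pow 2))
    · exact hcs_sub (hcs_mul_left (hcs_sq h2)) (hcs_mul_left (hcs_sq h2.deriv))
  have hD : 0 < ∫ x : ℝ, ψ x ^ 2 := by
    rw [integral_pos_iff_support_of_nonneg (fun x => sq_nonneg (ψ x)) hsq]
    have : Function.support (fun x => ψ x ^ 2) = Function.support ψ := by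
      ext x; simp [Function.mem_support, pow_eq_zero_iff]
    rw [this]
    have hopen : IsOpen (Function.support ψ) := hψc.isOpen_support
    have hne : (Function.support ψ).Nonempty := Function.support_nonempty_iff.mpr h3
    exact hopen.measure_pos volume hne
  rw [div_le_iff₀ hD]
  calc (∫ x : ℝ, (r x * ψ x ^ 2 - a x * deriv ψ x ^ 2))
      ≤ ∫ x : ℝ, μ * ψ x ^ 2 := by
        apply integral_mono hnum (hsq.const_mul μ)
        intro x
        have h1' : r x * ψ x ^ 2 ≤ μ * ψ x ^ 2 :=
          mul_le_mul_of_nonneg_right (le_trans (le_abs_self _) (hr x)) (sq_nonneg _)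
        have h2' : 0 ≤ a x * deriv ψ x ^ 2 := mul_nonneg (hapos x).le (sq_nonneg _)
        dsimp only; linarith
    _ = μ * ∫ x : ℝ, ψ x ^ 2 := integral_const_mul μ _


lemma bounded_of_tendsto_zero (φ : ℝ → ℝ) (hc : Continuous φ)
    (htop : Tendsto φ atTop (nhds 0)) (hbot : Tendsto φ atBot (nhds 0)) :
    ∃ M : ℝ, 0 ≤ M ∧ ∀ x, |φ x| ≤ M := by
  have hco : Tendsto φ (cocompact ℝ) (nhds 0) := by
    rw [cocompact_eq_atBot_atTop]
    exact tendsto_sup.mpr ⟨hbot, htop⟩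
  have hev : ∀ᶠ x in cocompact ℝ, |φ x| ≤ 1 := by
    filter_upwards [hco.eventually (Metric.ball_mem_nhds (0:ℝ) one_pos)] with x hx
    rw [Real.dist_eq, sub_zero] at hx
    exact hx.le
  obtain ⟨K, hKc, hK⟩ := mem_cocompact.mp hev
  obtain ⟨C, hC⟩ := hKc.exists_bound_of_continuousOn hc.continuousOn
  refine ⟨max C 1, le_trans zero_le_one (le_max_right _ _), fun x => ?_⟩
  by_cases hx : x ∈ K
  · exact le_trans (hC x hx) (le_max_left _ _)
  · exact le_trans (hK hx) (le_max_right _ _)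



lemma ge_gammaBar_of_decay (μ : ℝ) (hμ : 1 ≤ μ) (a r : ℝ → ℝ)
    (hac : Continuous a) (hrc : Continuous r)
    (ha : ∀ x, 1 / μ ≤ a x ∧ a x ≤ μ) (hr : ∀ x, |r x| ≤ μ)
    (γ : ℝ) (φ φ' : ℝ → ℝ)
    (hpos : ∀ x, 0 < φ x) (h0 : φ 0 = 1)
    (hd : ∀ x, HasDerivAt φ (φ' x) x)
    (hode : ∀ x, HasDerivAt (fun y => a y * φ' y) ((γ - r x) * φ x) x)
    (htop : Tendsto φ atTop (nhds 0)) (hbot : Tendsto φ atBot (nhds 0)) :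
    γ ≤ gammaBar a r := by
  have hμ0 : (0:ℝ) < μ := lt_of_lt_of_le one_pos hμ
  have hapos : ∀ x, 0 < a x := fun x => lt_of_lt_of_le (by positivity) (ha x).1
  -- continuity facts
  have hφc : Continuous φ := by
    rw [continuous_iff_continuousAt]; exact fun x => (hd x).continuousAt
  have haφ'c : Continuous (fun y => a y * φ' y) := by
    rw [continuous_iff_continuousAt]
    exact fun x => (hode x).differentiableAt.continuousAt
  have hφ'c : Continuous φ' := by
    have : φ' = fun x => (a x * φ' x) / a x := by
      funext x; exact (mul_div_cancel_left₀ _ (hapos x).ne').symm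
    rw [this]
    exact haφ'c.div hac (fun x => (hapos x).ne')
  -- bound on φ
  obtain ⟨M, hM0, hM⟩ : ∃ M : ℝ, 0 ≤ M ∧ ∀ x, |φ x| ≤ M :=
    bounded_of_tendsto_zero φ hφc htop hbot
  -- bump function
  let f : ContDiffBump (0:ℝ) := ⟨1, 2, one_pos, one_lt_two⟩
  have hfC : ContDiff ℝ 1 f := f.contDiff
  have hfc : Continuous f := hfC.continuous
  have hf1 : ∀ x : ℝ, |x| ≤ 1 → f x = 1 := by
    intro x hx
    exact f.one_of_mem_closedBall (by simpa [Real.dist_eq] using hx)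
  have hf0 : ∀ x : ℝ, 2 ≤ |x| → f x = 0 := by
    intro x hx
    have : x ∉ Function.support f := by
      rw [f.support_eq]
      simp only [mem_ball, Real.dist_eq, sub_zero, not_lt]
      exact hx
    simpa [Function.mem_support, not_not] using this
  have hfd : ∀ x, HasDerivAt f (deriv (f : ℝ → ℝ) x) x :=
    fun x => ((hfC.differentiable one_ne_zero) x).hasDerivAt
  have hfdc : Continuous (deriv (f : ℝ → ℝ)) := (contDiff_one_iff_deriv.mp hfC).2
  have hfd0 : ∀ x : ℝ, 2 < |x| → deriv (f : ℝ → ℝ) x = 0 := by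
    intro x hx
    by_contra h
    have hmem : x ∈ tsupport (f : ℝ → ℝ) := support_deriv_subset (Function.mem_support.mpr h)
    rw [f.tsupport_eq] at hmem
    simp only [mem_closedBall, Real.dist_eq, sub_zero] at hmem
    linarith
  obtain ⟨C, hC0, hC⟩ : ∃ C : ℝ, 0 ≤ C ∧ ∀ x, |deriv (f : ℝ → ℝ) x| ≤ C := by
    obtain ⟨x₀, hx₀⟩ := (continuous_abs.comp hfdc).exists_forall_ge_of_hasCompactSupport
      (f.hasCompactSupport.deriv.abs)
    exact ⟨|deriv (f:ℝ→ℝ) x₀|, abs_nonneg _, hx₀⟩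
  -- lower bound for the denominator
  set d0 := ∫ x in Icc (-1:ℝ) 1, φ x ^ 2 with hd0def
  have hd0pos : 0 < d0 := by
    obtain ⟨z, hz, hmin⟩ := isCompact_Icc.exists_isMinOn (α := ℝ)
      (by norm_num : (Icc (-1:ℝ) 1).Nonempty) hφc.continuousOn
    have hkey : φ z ^ 2 * (volume (Icc (-1:ℝ) 1)).toReal ≤ d0 := by
      rw [← measureReal_def, mul_comm, ← smul_eq_mul]
      apply setIntegral_ge_of_const_le measurableSet_Icc
      · rw [Real.volume_Icc]; exact ENNReal.ofReal_ne_top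
      · intro x hx
        exact pow_le_pow_left₀ (hpos z).le (hmin hx) 2
      · exact (hφc.pow 2).integrableOn_Icc
    have hvol : (volume (Icc (-1:ℝ) 1)).toReal = 2 := by
      rw [Real.volume_Icc]; norm_num
    rw [hvol] at hkey
    nlinarith [hpos z, sq_nonneg (φ z)]
  set K := 6 * μ * C ^ 2 * M ^ 2 with hKdef
  have hK0 : 0 ≤ K := by positivity
  -- the per-n Rayleigh quotient estimate
  have claim : ∀ n : ℕ, 1 ≤ (n:ℝ) → γ - K / (n * d0) ≤ gammaBar a r := by
    intro n hn1
    have hnpos : (0:ℝ) < n := lt_of_lt_of_le one_pos hn1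
    set χ : ℝ → ℝ := fun x => f (x / (n:ℝ)) with hχdef
    set χ' : ℝ → ℝ := fun x => deriv (f : ℝ → ℝ) (x / (n:ℝ)) * (1 / (n:ℝ)) with hχ'def
    have hχd : ∀ x, HasDerivAt χ (χ' x) x := by
      intro x
      exact (hfd (x / (n:ℝ))).comp (h := fun y : ℝ => y / (n:ℝ)) x ((hasDerivAt_id x).div_const (n:ℝ))
    have hχc : Continuous χ := hfc.comp (continuous_id.div_const (n:ℝ))
    have hχ'c : Continuous χ' :=
      (hfdc.comp (continuous_id.div_const (n:ℝ))).mul continuous_const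
    have hχ1 : ∀ x : ℝ, |x| ≤ 1 → χ x = 1 := by
      intro x hx
      apply hf1
      rw [abs_div, abs_of_pos hnpos, div_le_one hnpos]
      linarith
    have hB : ∀ x : ℝ, x ∉ Icc (-(3*(n:ℝ))) (3*n) → 2 < |x / n| := by
      intro x hx
      rw [mem_Icc, not_and_or, not_le, not_le] at hx
      rw [abs_div, abs_of_pos hnpos, lt_div_iff₀ hnpos]
      rcases hx with h | h
      · rw [abs_of_neg (by nlinarith)]; nlinarith
      · rw [abs_of_pos (by nlinarith)]; nlinarith
    have hχ0 : ∀ x : ℝ, x ∉ Icc (-(3*(n:ℝ))) (3*n) → χ x = 0 :=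
      fun x hx => hf0 _ (hB x hx).le
    have hχ'0 : ∀ x : ℝ, x ∉ Icc (-(3*(n:ℝ))) (3*n) → χ' x = 0 := by
      intro x hx
      have := hfd0 _ (hB x hx)
      rw [hχ'def]; simp only [this, zero_mul]
    have hχ'b : ∀ x, |χ' x| ≤ C / n := by
      intro x
      rw [hχ'def]
      rw [abs_mul, abs_div, abs_one, abs_of_pos hnpos]
      rw [div_eq_mul_one_div C n]
      exact mul_le_mul_of_nonneg_right (hC _) (by positivity)
    -- the test function
    set u : ℝ → ℝ := fun x => χ x * φ x with hudef
    set u' : ℝ → ℝ := fun x => χ' x * φ x + χ x * φ' x with hu'def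
    have hud : ∀ x, HasDerivAt u (u' x) x := fun x => (hχd x).mul (hd x)
    have hderivu : deriv u = u' := funext fun x => (hud x).deriv
    have hu'c : Continuous u' := (hχ'c.mul hφc).add (hχc.mul hφ'c)
    have huC1 : ContDiff ℝ 1 u :=
      contDiff_one_iff_deriv.mpr ⟨fun x => (hud x).differentiableAt, hderivu ▸ hu'c⟩
    have hucont : Continuous u := hχc.mul hφc
    have hcsu : HasCompactSupport u :=
      HasCompactSupport.intro (isCompact_Icc (a := -(3*(n:ℝ))) (b := 3*n)) (fun x hx => by
        rw [hudef]; simp only [hχ0 x hx, zero_mul])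
    have hune0 : u ≠ 0 := by
      intro h
      have : u 0 = 0 := by rw [h]; rfl
      rw [hudef] at this
      simp only [hχ1 0 (by norm_num), h0, mul_one] at this
      exact one_ne_zero this
    -- integrability helper
    have key : ∀ g : ℝ → ℝ, Continuous g →
        (∀ x, x ∉ Icc (-(3*(n:ℝ))) (3*n) → g x = 0) → Integrable g :=
      fun g hg hz => hg.integrable_of_hasCompactSupport
        (HasCompactSupport.intro (isCompact_Icc (a := -(3*(n:ℝ))) (b := 3*n)) hz)
    have int_u2 : Integrable (fun x => u x ^ 2) :=
      key _ (hucont.pow 2) (fun x hx => by rw [hudef]; simp [hχ0 x hx])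
    have int_E : Integrable (fun x => a x * χ' x ^ 2 * φ x ^ 2) :=
      key _ ((hac.mul (hχ'c.pow 2)).mul (hφc.pow 2))
        (fun x hx => by simp [hχ'0 x hx])
    -- integration by parts
    set F : ℝ → ℝ := fun x => χ x ^ 2 * φ x * (a x * φ' x) with hFdef
    set G : ℝ → ℝ := fun x => (2 * χ x * χ' x * φ x + χ x ^ 2 * φ' x) * (a x * φ' x)
      + χ x ^ 2 * φ x * ((γ - r x) * φ x) with hGdef
    have hFd : ∀ x, HasDerivAt F (G x) x := by
      intro x
      have h1 : HasDerivAt (fun y => χ y ^ 2) (2 * χ x * χ' x) x := by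
        have := (hχd x).fun_pow 2
        simpa [mul_comm, mul_assoc, mul_left_comm] using this
      have h2 : HasDerivAt (fun y => χ y ^ 2 * φ y)
          (2 * χ x * χ' x * φ x + χ x ^ 2 * φ' x) x := h1.mul (hd x)
      exact h2.mul (hode x)
    have int_G : Integrable G := by
      apply key _ (by
        apply Continuous.add
        · exact ((((continuous_const.mul hχc).mul hχ'c).mul hφc).add
            ((hχc.pow 2).mul hφ'c)).mul (hac.mul hφ'c)
        · exact ((hχc.pow 2).mul hφc).mul ((continuous_const.sub hrc).mul hφc))
      intro x hx
      simp [hGdef, hχ0 x hx, hχ'0 x hx]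
    have int_F : Integrable F := by
      apply key _ (((hχc.pow 2).mul hφc).mul (hac.mul hφ'c))
      intro x hx
      simp [hFdef, hχ0 x hx]
    have hintG : ∫ x : ℝ, G x = 0 :=
      integral_eq_zero_of_hasDerivAt_of_integrable hFd int_G int_F
    -- numerator identity
    have hptwise : ∀ x, r x * u x ^ 2 - a x * deriv u x ^ 2
        = γ * u x ^ 2 - a x * χ' x ^ 2 * φ x ^ 2 - G x := by
      intro x
      rw [hderivu, hudef, hu'def, hGdef]
      ring
    have int_N : Integrable (fun x => r x * u x ^ 2 - a x * deriv u x ^ 2) := by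
      apply key _ ((hrc.mul (hucont.pow 2)).sub
        (hac.mul (((hderivu ▸ hu'c).pow 2))))
      intro x hx
      rw [hderivu, hudef, hu'def]
      simp [hχ0 x hx, hχ'0 x hx]
    set Dn := ∫ x : ℝ, u x ^ 2 with hDndef
    set En := ∫ x : ℝ, a x * χ' x ^ 2 * φ x ^ 2 with hEndef
    have hN : (∫ x : ℝ, (r x * u x ^ 2 - a x * deriv u x ^ 2)) = γ * Dn - En := by
      calc (∫ x : ℝ, (r x * u x ^ 2 - a x * deriv u x ^ 2))
          = ∫ x : ℝ, ((γ * u x ^ 2 - a x * χ' x ^ 2 * φ x ^ 2) - G x) :=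
            integral_congr_ae (Eventually.of_forall fun x => hptwise x)
        _ = (∫ x : ℝ, (γ * u x ^ 2 - a x * χ' x ^ 2 * φ x ^ 2)) - ∫ x : ℝ, G x :=
            integral_sub ((int_u2.const_mul γ).sub int_E) int_G
        _ = ((∫ x : ℝ, γ * u x ^ 2) - En) - 0 := by
            rw [hintG, integral_sub (int_u2.const_mul γ) int_E]
        _ = γ * Dn - En := by rw [integral_const_mul]; ring
    -- denominator bound
    have hDn_ge : d0 ≤ Dn := by
      have h1 : ∫ x in Icc (-1:ℝ) 1, u x ^ 2 = d0 := by
        rw [hd0def]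
        apply setIntegral_congr_fun measurableSet_Icc
        intro x hx
        simp only [mem_Icc] at hx
        show (χ x * φ x) ^ 2 = φ x ^ 2
        rw [hχ1 x (abs_le.mpr ⟨hx.1, hx.2⟩), one_mul]
      rw [← h1]
      exact setIntegral_le_integral int_u2 (ae_of_all _ fun x => sq_nonneg _)
    have hDnpos : 0 < Dn := lt_of_lt_of_le hd0pos hDn_ge
    -- error bound
    have hEn_nn : 0 ≤ En :=
      integral_nonneg fun x => mul_nonneg (mul_nonneg (hapos x).le (sq_nonneg _)) (sq_nonneg _)
    have hEn_le : En ≤ K / n := by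
      have h1 : En = ∫ x in Icc (-(3*(n:ℝ))) (3*n), a x * χ' x ^ 2 * φ x ^ 2 := by
        rw [hEndef]
        exact (setIntegral_eq_integral_of_forall_compl_eq_zero
          (fun x hx => by simp [hχ'0 x hx])).symm
      have h2 : ∫ x in Icc (-(3*(n:ℝ))) (3*n), a x * χ' x ^ 2 * φ x ^ 2
          ≤ ∫ _x in Icc (-(3*(n:ℝ))) (3*n), μ * (C / n) ^ 2 * M ^ 2 := by
        apply setIntegral_mono_on int_E.integrableOn (integrableOn_const
          (by rw [Real.volume_Icc]; exact ENNReal.ofReal_ne_top)) measurableSet_Icc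
        intro x _
        have hb1 : a x * χ' x ^ 2 ≤ μ * (C / n) ^ 2 := by
          apply mul_le_mul (ha x).2 ?_ (sq_nonneg _) hμ0.le
          rw [← sq_abs (χ' x)]
          exact pow_le_pow_left₀ (abs_nonneg _) (hχ'b x) 2
        have hb2 : φ x ^ 2 ≤ M ^ 2 := by
          rw [← sq_abs (φ x)]
          exact pow_le_pow_left₀ (abs_nonneg _) (hM x) 2
        have h0' : 0 ≤ a x * χ' x ^ 2 := mul_nonneg (hapos x).le (sq_nonneg _)
        exact mul_le_mul hb1 hb2 (sq_nonneg _) (by positivity)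
      have h3 : ∫ _x in Icc (-(3*(n:ℝ))) (3*n), μ * (C / n) ^ 2 * M ^ 2
          = (6 * n) * (μ * (C / n) ^ 2 * M ^ 2) := by
        rw [setIntegral_const, Real.volume_real_Icc, smul_eq_mul]
        congr 1
        rw [max_eq_left (by linarith)]
        ring
      have h4 : (6 * (n:ℝ)) * (μ * (C / n) ^ 2 * M ^ 2) = K / n := by
        rw [hKdef]
        field_simp
      rw [h1]
      calc _ ≤ _ := h2
        _ = _ := h3
        _ = K / n := h4
    -- the Rayleigh quotient of u belongs to the defining set
    have hmem : (∫ x : ℝ, (r x * u x ^ 2 - a x * deriv u x ^ 2)) / Dn ∈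
        {c : ℝ | ∃ ψ : ℝ → ℝ, ContDiff ℝ 1 ψ ∧ HasCompactSupport ψ ∧ ψ ≠ 0 ∧
          c = (∫ x : ℝ, (r x * ψ x ^ 2 - a x * deriv ψ x ^ 2)) / ∫ x : ℝ, ψ x ^ 2} :=
      ⟨u, huC1, hcsu, hune0, rfl⟩
    have hbdd : BddAbove {c : ℝ | ∃ ψ : ℝ → ℝ, ContDiff ℝ 1 ψ ∧ HasCompactSupport ψ ∧ ψ ≠ 0 ∧
        c = (∫ x : ℝ, (r x * ψ x ^ 2 - a x * deriv ψ x ^ 2)) / ∫ x : ℝ, ψ x ^ 2} := by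
      refine ⟨μ, fun c hc => ?_⟩
      obtain ⟨ψ, h1, h2, h3, rfl⟩ := hc
      exact rayleigh_le μ hμ a r hac hrc ha hr ψ h1 h2 h3
    have hle : (∫ x : ℝ, (r x * u x ^ 2 - a x * deriv u x ^ 2)) / Dn ≤ gammaBar a r :=
      le_csSup hbdd hmem
    have hfinal : γ - K / (n * d0) ≤
        (∫ x : ℝ, (r x * u x ^ 2 - a x * deriv u x ^ 2)) / Dn := by
      have h5 : (γ * Dn - En) / Dn = γ - En / Dn := by
        field_simp
      rw [hN, h5]
      have hEDn : En / Dn ≤ (K / n) / d0 :=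
        div_le_div₀ (by positivity) hEn_le hd0pos hDn_ge
      have h6 : (K / n) / d0 = K / (n * d0) := by rw [div_div]
      linarith
    linarith
  -- conclusion
  by_contra hcon
  push_neg at hcon
  obtain ⟨n, hn⟩ := exists_nat_gt (max 1 (K / (d0 * (γ - gammaBar a r))))
  have hn1 : (1:ℝ) ≤ n := le_of_lt (lt_of_le_of_lt (le_max_left _ _) hn)
  have hnposn : (0:ℝ) < n := lt_of_lt_of_le one_pos hn1
  have hgap : 0 < γ - gammaBar a r := sub_pos.mpr hcon
  have hlt : K / (n * d0) < γ - gammaBar a r := by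
    rw [div_lt_iff₀ (by positivity)]
    have h2 : K / (d0 * (γ - gammaBar a r)) < n := lt_of_le_of_lt (le_max_right _ _) hn
    rw [div_lt_iff₀ (by positivity)] at h2
    nlinarith
  have := claim n hn1
  linarith


/-- Lemma 6.1: the Wronskian `W_γ = a(φ̃_γ'φ_γ − φ_γ'φ̃_γ)` is a positive constant. -/
theorem wronskian_positive_constant (μ : ℝ) (hμ : 1 ≤ μ) (a r : ℝ → ℝ)
    (hac : Continuous a) (hrc : Continuous r)
    (ha : ∀ x, 1 / μ ≤ a x ∧ a x ≤ μ) (hr : ∀ x, |r x| ≤ μ)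
    (γ : ℝ) (hγ : gammaBar a r < γ)
    (φ φ' φt φt' : ℝ → ℝ)
    (hφ : IsGenPrincEig a r γ Filter.atTop φ φ')
    (hφt : IsGenPrincEig a r γ Filter.atBot φt φt') :
    ∃ c : ℝ, 0 < c ∧ ∀ x : ℝ, a x * (φt' x * φ x - φ' x * φt x) = c := by
  obtain ⟨hpos, h0, hd, hode, htop⟩ := hφ
  obtain ⟨htpos, ht0, htd, htode, hbot⟩ := hφt
  have hμ0 : (0:ℝ) < μ := lt_of_lt_of_le one_pos hμ
  have hapos : ∀ x, 0 < a x := fun x => lt_of_lt_of_le (by positivity) (ha x).1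
  -- the Wronskian
  set W : ℝ → ℝ := fun x => (a x * φt' x) * φ x - (a x * φ' x) * φt x with hWdef
  have hWd : ∀ x, HasDerivAt W 0 x := by
    intro x
    have h1 : HasDerivAt (fun y => (a y * φt' y) * φ y)
        (((γ - r x) * φt x) * φ x + (a x * φt' x) * φ' x) x := (htode x).mul (hd x)
    have h2 : HasDerivAt (fun y => (a y * φ' y) * φt y)
        (((γ - r x) * φ x) * φt x + (a x * φ' x) * φt' x) x := (hode x).mul (htd x)
    have h3 := h1.fun_sub h2
    exact h3.congr_deriv (by ring)
  have hWconst : ∀ x, W x = W 0 := by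
    intro x
    exact is_const_of_deriv_eq_zero (fun y => (hWd y).differentiableAt)
      (fun y => (hWd y).deriv) x 0
  refine ⟨W 0, ?_, fun x => by rw [← hWconst x, hWdef]; ring⟩
  -- positivity
  by_contra hc
  push_neg at hc
  -- then the ratio φ/φt is nondecreasing, hence φ → 0 also at -∞
  have hratio : ∀ x, 0 ≤ (φ' x * φt x - φ x * φt' x) / φt x ^ 2 := by
    intro x
    have h1 : W x ≤ 0 := (hWconst x).le.trans hc
    simp only [hWdef] at h1
    have h2 : a x * (φt' x * φ x - φ' x * φt x) ≤ 0 := by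
      have he : a x * (φt' x * φ x - φ' x * φt x)
          = a x * φt' x * φ x - a x * φ' x * φt x := by ring
      linarith [he.le, he.ge]
    have h3 : φt' x * φ x - φ' x * φt x ≤ 0 := by
      by_contra h4
      push_neg at h4
      exact absurd h2 (not_le.mpr (mul_pos (hapos x) h4))
    apply div_nonneg _ (sq_nonneg _)
    have h5 : φ' x * φt x - φ x * φt' x = -(φt' x * φ x - φ' x * φt x) := by ring
    rw [h5]
    exact neg_nonneg.mpr h3
  have hρd : ∀ x, HasDerivAt (fun y => φ y / φt y)
      ((φ' x * φt x - φ x * φt' x) / φt x ^ 2) x :=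
    fun x => (hd x).div (htd x) (htpos x).ne'
  have hmono : Monotone (fun y => φ y / φt y) := by
    apply monotone_of_deriv_nonneg
    · exact fun x => (hρd x).differentiableAt
    · intro x
      rw [(hρd x).deriv]
      exact hratio x
  have hle : ∀ x ≤ 0, φ x ≤ (1 / φt 0) * φt x := by
    intro x hx
    have := hmono hx
    simp only [h0] at this
    rw [div_le_div_iff₀ (htpos x) (htpos 0)] at this
    rw [one_div, inv_mul_eq_div, le_div_iff₀ (htpos 0)]
    linarith
  have hbotφ : Tendsto φ atBot (nhds 0) := by
    have hK : Tendsto (fun x => (1 / φt 0) * φt x) atBot (nhds 0) := by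
      have := hbot.const_mul (1 / φt 0)
      simpa using this
    apply tendsto_of_tendsto_of_tendsto_of_le_of_le' tendsto_const_nhds hK
    · exact Eventually.of_forall fun x => (hpos x).le
    · exact eventually_atBot.mpr ⟨0, hle⟩
  have := ge_gammaBar_of_decay μ hμ a r hac hrc ha hr γ φ φ' hpos h0 hd hode htop hbotφ
  linarith
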